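/- The Sombor index of H(n,t) equals (n − 2t − 1)·√((n−1)² + 1) + 2t·√((n−1)² + 4) + 2√2·t. -/

import Mathlib

attribute [local instance] Classical.propDecidable

/-- The Sombor index of a finite simple graph:
`SO(G) = Σ_{uv ∈ E(G)} √(d(u)² + d(v)²)`, written as half the sum over ordered adjacent pairs. -/
noncomputable def somborIndex {V : Type*} [Fintype V] (G : SimpleGraph V) : ℝ :=
  (∑ u : V, ∑ v : V,
      if G.Adj u v then Real.sqrt ((G.degree u : ℝ)^2 + (G.degree v : ℝ)^2) else 0) / 2

/-- A cactus: a connected graph in which any two distinct cycles share at most one vertex. -/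
def IsCactus {V : Type*} (G : SimpleGraph V) : Prop :=
  G.Connected ∧ ∀ (u v : V) (c₁ : G.Walk u u) (c₂ : G.Walk v v),
    c₁.IsCycle → c₂.IsCycle → c₁.edges.toFinset ≠ c₂.edges.toFinset →
      (c₁.support.toFinset ∩ c₂.support.toFinset).card ≤ 1

/-- `Hgraph n t` : the cactus obtained from the star `K_{1,n-1}` (center `0`) by joining the
`t` disjoint pairs of pendant vertices `(2k+1, 2k+2)`, `k < t`, by edges. -/
def Hgraph (n t : ℕ) : SimpleGraph (Fin n) :=
  SimpleGraph.fromRel (fun u v =>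
    u.val = 0 ∨ ∃ k, k < t ∧ u.val = 2 * k + 1 ∧ v.val = 2 * k + 2)

/-- `HstarGraph β t` : the cactus on `2β` vertices with a perfect matching: a center `0` of
degree `β + t` adjacent to `1, …, β + t`; `t` triangles through the center formed by the edges
`(2k+1, 2k+2)`, `k < t`; vertex `β + t` is a pendant vertex at the center; and each vertex
`2t + j` (`1 ≤ j ≤ β - t - 1`) carries the pendant vertex `β + t + j`. -/
def HstarGraph (β t : ℕ) : SimpleGraph (Fin (2 * β)) :=
  SimpleGraph.fromRel (fun u v =>
    (u.val = 0 ∧ 1 ≤ v.val ∧ v.val ≤ β + t) ∨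
    (∃ k, k < t ∧ u.val = 2 * k + 1 ∧ v.val = 2 * k + 2) ∨
    (∃ j, 1 ≤ j ∧ j ≤ β - t - 1 ∧ u.val = 2 * t + j ∧ v.val = β + t + j))

lemma hgraph_adj {n t : ℕ} {u v : Fin n} :
    (Hgraph n t).Adj u v ↔ u ≠ v ∧ (u.val = 0 ∨ v.val = 0 ∨
      ∃ k, k < t ∧ (u.val = 2*k+1 ∧ v.val = 2*k+2 ∨ v.val = 2*k+1 ∧ u.val = 2*k+2)) := by
  simp only [Hgraph, SimpleGraph.fromRel_adj]
  constructor
  · rintro ⟨hne, (h0 | ⟨k,hk,ha,hb⟩) | (h0 | ⟨k,hk,ha,hb⟩)⟩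
    · exact ⟨hne, Or.inl h0⟩
    · exact ⟨hne, Or.inr (Or.inr ⟨k, hk, Or.inl ⟨ha, hb⟩⟩)⟩
    · exact ⟨hne, Or.inr (Or.inl h0)⟩
    · exact ⟨hne, Or.inr (Or.inr ⟨k, hk, Or.inr ⟨ha, hb⟩⟩)⟩
  · rintro ⟨hne, h0 | h0 | ⟨k,hk,⟨ha,hb⟩|⟨ha,hb⟩⟩⟩
    · exact ⟨hne, Or.inl (Or.inl h0)⟩
    · exact ⟨hne, Or.inr (Or.inl h0)⟩
    · exact ⟨hne, Or.inl (Or.inr ⟨k,hk,ha,hb⟩)⟩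
    · exact ⟨hne, Or.inr (Or.inr ⟨k,hk,ha,hb⟩)⟩

lemma nbh_zero {n t : ℕ} (u : Fin n) (hu : u.val = 0) :
    (Hgraph n t).neighborFinset u = Finset.univ.erase u := by
  ext v
  rw [SimpleGraph.mem_neighborFinset, hgraph_adj, Finset.mem_erase]
  constructor
  · rintro ⟨hne, -⟩; exact ⟨hne.symm, Finset.mem_univ _⟩
  · rintro ⟨hne, -⟩; exact ⟨hne.symm, Or.inl hu⟩

lemma nbh_mid {n t : ℕ} (h : 2 * t + 1 ≤ n) (u : Fin n) (h1 : 1 ≤ u.val) (h2 : u.val ≤ 2*t) :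
    ∃ z w : Fin n, z.val = 0 ∧ 1 ≤ w.val ∧ w.val ≤ 2*t ∧ z ≠ w ∧
      (Hgraph n t).neighborFinset u = {z, w} := by
  rcases Nat.even_or_odd u.val with he | ho
  · obtain ⟨m, hm⟩ := he
    obtain ⟨z, hz⟩ : ∃ z : Fin n, z.val = 0 := ⟨⟨0, by omega⟩, rfl⟩
    obtain ⟨w, hw⟩ : ∃ w : Fin n, w.val = u.val - 1 := ⟨⟨u.val - 1, by omega⟩, rfl⟩
    refine ⟨z, w, hz, by omega, by omega, Fin.ne_of_val_ne (by omega), ?_⟩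
    ext v
    rw [SimpleGraph.mem_neighborFinset, hgraph_adj]
    simp only [Finset.mem_insert, Finset.mem_singleton, Fin.ext_iff]
    constructor
    · rintro ⟨hne, h0 | h0 | ⟨k, hkt, ⟨ha, hb⟩ | ⟨ha, hb⟩⟩⟩ <;> omega
    · rintro (hv | hv)
      · exact ⟨Fin.ne_of_val_ne (by omega), Or.inr (Or.inl (by omega))⟩
      · exact ⟨Fin.ne_of_val_ne (by omega), Or.inr (Or.inr ⟨m - 1, by omega,
          Or.inr ⟨by omega, by omega⟩⟩)⟩
  · obtain ⟨m, hm⟩ := ho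
    obtain ⟨z, hz⟩ : ∃ z : Fin n, z.val = 0 := ⟨⟨0, by omega⟩, rfl⟩
    obtain ⟨w, hw⟩ : ∃ w : Fin n, w.val = u.val + 1 := ⟨⟨u.val + 1, by omega⟩, rfl⟩
    refine ⟨z, w, hz, by omega, by omega, Fin.ne_of_val_ne (by omega), ?_⟩
    ext v
    rw [SimpleGraph.mem_neighborFinset, hgraph_adj]
    simp only [Finset.mem_insert, Finset.mem_singleton, Fin.ext_iff]
    constructor
    · rintro ⟨hne, h0 | h0 | ⟨k, hkt, ⟨ha, hb⟩ | ⟨ha, hb⟩⟩⟩ <;> omega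
    · rintro (hv | hv)
      · exact ⟨Fin.ne_of_val_ne (by omega), Or.inr (Or.inl (by omega))⟩
      · exact ⟨Fin.ne_of_val_ne (by omega), Or.inr (Or.inr ⟨m, by omega,
          Or.inl ⟨by omega, by omega⟩⟩)⟩

lemma nbh_pendant {n t : ℕ} (u z : Fin n) (h1 : 2*t+1 ≤ u.val) (hz : z.val = 0) :
    (Hgraph n t).neighborFinset u = {z} := by
  ext v
  rw [SimpleGraph.mem_neighborFinset, hgraph_adj]
  simp only [Finset.mem_singleton, Fin.ext_iff]
  constructor
  · rintro ⟨hne, h0 | h0 | ⟨k, hkt, ⟨ha, hb⟩ | ⟨ha, hb⟩⟩⟩ <;> omega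
  · rintro hv
    exact ⟨Fin.ne_of_val_ne (by omega), Or.inr (Or.inl (by omega))⟩

lemma deg_cast {n t : ℕ} (h : 2 * t + 1 ≤ n) (v : Fin n) :
    ((Hgraph n t).degree v : ℝ) =
      if v.val = 0 then (n:ℝ)-1 else if v.val ≤ 2*t then 2 else 1 := by
  rcases eq_or_ne v.val 0 with hv | hv
  · rw [if_pos hv, ← SimpleGraph.card_neighborFinset_eq_degree, nbh_zero v hv,
      Finset.card_erase_of_mem (Finset.mem_univ v), Finset.card_univ, Fintype.card_fin,
      Nat.cast_sub (by omega), Nat.cast_one]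
  · rw [if_neg hv]
    by_cases h2 : v.val ≤ 2*t
    · rw [if_pos h2]
      obtain ⟨z, w, hz, hw1, hw2, hzw, hnb⟩ := nbh_mid h v (by omega) h2
      rw [← SimpleGraph.card_neighborFinset_eq_degree, hnb, Finset.card_pair hzw]
      norm_num
    · rw [if_neg h2,
        ← SimpleGraph.card_neighborFinset_eq_degree,
        nbh_pendant v ⟨0, by omega⟩ (by omega) rfl, Finset.card_singleton]
      norm_num

lemma row_eq {V : Type*} [Fintype V] (G : SimpleGraph V) (u : V) (f : V → ℝ) :
    (∑ v : V, if G.Adj u v then f v else 0) = ∑ v ∈ G.neighborFinset u, f v := by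
  rw [SimpleGraph.neighborFinset_eq_filter, Finset.sum_filter]

lemma sum_range_split (n t : ℕ) (h : 2*t+1 ≤ n) (Fn : ℕ → ℝ) (c1 c2 : ℝ)
    (h1 : ∀ a, 1 ≤ a → a ≤ 2*t → Fn a = c1) (h2 : ∀ a, 2*t+1 ≤ a → Fn a = c2) :
    ∑ a ∈ Finset.range n, Fn a = Fn 0 + (2*(t:ℝ))*c1 + ((n:ℝ)-2*t-1)*c2 := by
  rw [Finset.range_eq_Ico,
    ← Finset.sum_Ico_consecutive _ (by omega : 0 ≤ 2*t+1) h,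
    ← Finset.sum_Ico_consecutive _ (by omega : (0:ℕ) ≤ 1) (by omega : 1 ≤ 2*t+1)]
  have e0 : ∑ a ∈ Finset.Ico 0 1, Fn a = Fn 0 := by simp
  have e1 : ∑ a ∈ Finset.Ico 1 (2*t+1), Fn a = (2*(t:ℝ)) * c1 := by
    have hc : ∀ a ∈ Finset.Ico 1 (2*t+1), Fn a = c1 := by
      intro a ha
      rw [Finset.mem_Ico] at ha
      exact h1 a ha.1 (by omega)
    rw [Finset.sum_congr rfl hc, Finset.sum_const, Nat.card_Ico, nsmul_eq_mul]
    push_cast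
    ring
  have e2 : ∑ a ∈ Finset.Ico (2*t+1) n, Fn a = ((n:ℝ)-2*t-1) * c2 := by
    have hc : ∀ a ∈ Finset.Ico (2*t+1) n, Fn a = c2 := by
      intro a ha
      rw [Finset.mem_Ico] at ha
      exact h2 a ha.1
    rw [Finset.sum_congr rfl hc, Finset.sum_const, Nat.card_Ico, nsmul_eq_mul,
      Nat.cast_sub h]
    push_cast
    ring
  rw [e0, e1, e2]

theorem sombor_Hgraph (n t : ℕ) (h : 2 * t + 1 ≤ n) :
    somborIndex (Hgraph n t) = ((n : ℝ) - 2 * t - 1) * Real.sqrt (((n : ℝ) - 1)^2 + 1) +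
      2 * t * Real.sqrt (((n : ℝ) - 1)^2 + 4) + 2 * Real.sqrt 2 * t := by
  classical
  set A := Real.sqrt (((n:ℝ)-1)^2 + 4) with hA
  set B := Real.sqrt (((n:ℝ)-1)^2 + 1) with hB
  set S0 : ℝ := 2*(t:ℝ)*A + ((n:ℝ)-2*t-1)*B with hS0
  have h8 : Real.sqrt 8 = 2 * Real.sqrt 2 := by
    rw [show (8:ℝ) = 2^2*2 by norm_num, Real.sqrt_mul (by positivity),
      Real.sqrt_sq (by norm_num)]
  set Rn : ℕ → ℝ := fun a => if a = 0 then S0 else if a ≤ 2*t then A + 2*Real.sqrt 2 else B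
    with hRn
  have hrow : ∀ u : Fin n,
      (∑ v : Fin n, if (Hgraph n t).Adj u v then
        Real.sqrt (((Hgraph n t).degree u : ℝ)^2 + ((Hgraph n t).degree v : ℝ)^2) else 0)
      = Rn u.val := by
    intro u
    rw [row_eq]
    rcases eq_or_ne u.val 0 with hu | hu
    · have hdu : (((Hgraph n t).degree u : ℝ)) = (n:ℝ) - 1 := by rw [deg_cast h u, if_pos hu]
      rw [nbh_zero u hu, Finset.sum_erase_eq_sub (Finset.mem_univ u)]
      set Fn : ℕ → ℝ := fun a =>
        Real.sqrt (((n:ℝ)-1)^2 + (if a = 0 then (n:ℝ)-1 else if a ≤ 2*t then 2 else 1)^2)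
        with hFn
      have hFv : ∀ v : Fin n,
          Real.sqrt (((Hgraph n t).degree u : ℝ)^2 + ((Hgraph n t).degree v : ℝ)^2)
            = Fn v.val := by
        intro v; rw [hdu, deg_cast h v]
      rw [Finset.sum_congr rfl (fun v _ => hFv v), hFv u]
      rw [show (∑ v : Fin n, Fn v.val) = ∑ a ∈ Finset.range n, Fn a from
        Fin.sum_univ_eq_sum_range Fn n]
      rw [sum_range_split n t h Fn A B ?h1 ?h2]
      case h1 =>
        intro a ha1 ha2
        simp only [hFn]
        rw [if_neg (by omega), if_pos ha2]
        norm_num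
        exact hA.symm
      case h2 =>
        intro a ha
        simp only [hFn]
        rw [if_neg (by omega), if_neg (by omega)]
        norm_num
        exact hB.symm
      rw [hu]
      have hR0 : Rn 0 = S0 := by simp [hRn]
      rw [hR0, hS0]
      ring
    · by_cases h2 : u.val ≤ 2*t
      · have hdu : (((Hgraph n t).degree u : ℝ)) = 2 := by
          rw [deg_cast h u, if_neg hu, if_pos h2]
        obtain ⟨z, w, hz, hw1, hw2, hzw, hnb⟩ := nbh_mid h u (by omega) h2
        have hdz : (((Hgraph n t).degree z : ℝ)) = (n:ℝ)-1 := by rw [deg_cast h z, if_pos hz]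
        have hdw : (((Hgraph n t).degree w : ℝ)) = 2 := by
          rw [deg_cast h w, if_neg (by omega), if_pos hw2]
        rw [hnb, Finset.sum_pair hzw, hdu, hdz, hdw]
        have hR : Rn u.val = A + 2*Real.sqrt 2 := by
          simp only [hRn]; rw [if_neg hu, if_pos h2]
        rw [hR, hA, ← h8, show (2:ℝ)^2 + ((n:ℝ)-1)^2 = ((n:ℝ)-1)^2 + 4 by ring,
          show (2:ℝ)^2 + (2:ℝ)^2 = 8 by norm_num]
      · have hdu : (((Hgraph n t).degree u : ℝ)) = 1 := by
          rw [deg_cast h u, if_neg hu, if_neg h2]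
        have hdz : (((Hgraph n t).degree (⟨0, by omega⟩ : Fin n) : ℝ)) = (n:ℝ)-1 := by
          rw [deg_cast h _, if_pos rfl]
        rw [nbh_pendant u ⟨0, by omega⟩ (by omega) rfl, Finset.sum_singleton, hdu, hdz]
        have hR : Rn u.val = B := by simp only [hRn]; rw [if_neg hu, if_neg h2]
        rw [hR, hB, show (1:ℝ)^2 + ((n:ℝ)-1)^2 = ((n:ℝ)-1)^2 + 1 by ring]
  rw [somborIndex]
  rw [Finset.sum_congr rfl (fun u _ => hrow u)]
  rw [show (∑ u : Fin n, Rn u.val) = ∑ a ∈ Finset.range n, Rn a from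
    Fin.sum_univ_eq_sum_range Rn n]
  rw [sum_range_split n t h Rn (A + 2*Real.sqrt 2) B ?h1 ?h2]
  case h1 => intro a ha1 ha2; simp only [hRn]; rw [if_neg (by omega), if_pos ha2]
  case h2 => intro a ha; simp only [hRn]; rw [if_neg (by omega), if_neg (by omega)]
  have hR0 : Rn 0 = S0 := by simp [hRn]
  rw [hR0, hS0]
  ring
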